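/- Let g ∈ SO(n,1) act conformally on B_n, let x_0 = g·0, and let 0 < ε < 1/6. Then B(x_0, (√2/8)(1-|x_0|^2) ε) ⊂ g·B(0,ε) ⊂ B(x_0, 6(1-|x_0|^2) ε). -/

import Mathlib

noncomputable section

open Metric MeasureTheory

/-- The quadratic form -x₀² + x₁² + … + xₙ² on ℝ^{n+1}. -/
def Qform (n : ℕ) (x : Fin (n + 1) → ℝ) : ℝ :=
  -(x 0) ^ 2 + ∑ i : Fin n, (x i.succ) ^ 2

/-- Membership in SO(n,1): preserves the Lorentz quadratic form, has determinant 1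
and g₀₀ ≥ 1. -/
structure IsSOn1 (n : ℕ) (g : Matrix (Fin (n + 1)) (Fin (n + 1)) ℝ) : Prop where
  q_inv : ∀ x : Fin (n + 1) → ℝ, Qform n (g.mulVec x) = Qform n x
  det_one : g.det = 1
  g00 : 1 ≤ g 0 0

/-- The conformal action of SO(n,1) on the unit ball of ℝⁿ. -/
def act {n : ℕ} (g : Matrix (Fin (n + 1)) (Fin (n + 1)) ℝ)
    (x : EuclideanSpace ℝ (Fin n)) : EuclideanSpace ℝ (Fin n) :=
  WithLp.toLp 2 fun p : Fin n =>
    ((1 + ‖x‖ ^ 2) / 2 * g p.succ 0 + ∑ l : Fin n, g p.succ l.succ * x l) /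
      ((1 - ‖x‖ ^ 2) / 2 + (1 + ‖x‖ ^ 2) / 2 * g 0 0 + ∑ l : Fin n, g 0 l.succ * x l)

namespace SOn1Aux

open Matrix Finset

variable {n : ℕ}

def nsq (x : EuclideanSpace ℝ (Fin n)) : ℝ := ∑ i, x i ^ 2

lemma nsq_nonneg (x : EuclideanSpace ℝ (Fin n)) : 0 ≤ nsq x :=
  Finset.sum_nonneg fun i _ => sq_nonneg _

lemma nsq_eq (x : EuclideanSpace ℝ (Fin n)) : nsq x = ‖x‖ ^ 2 := by
  rw [EuclideanSpace.norm_eq, Real.sq_sqrt (by positivity)]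
  simp [nsq, sq_abs]

lemma nsq_zero : nsq (0 : EuclideanSpace ℝ (Fin n)) = 0 := by simp [nsq]

def uv (x : EuclideanSpace ℝ (Fin n)) : Fin (n+1) → ℝ :=
  Fin.cons ((1 + nsq x) / 2) (fun l => x l)

def Dg (g : Matrix (Fin (n+1)) (Fin (n+1)) ℝ) (x : EuclideanSpace ℝ (Fin n)) : ℝ :=
  (1 - nsq x) / 2 + (g.mulVec (uv x)) 0

lemma mulVec_uv (g : Matrix (Fin (n+1)) (Fin (n+1)) ℝ) (x : EuclideanSpace ℝ (Fin n))
    (j : Fin (n+1)) :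
    (g.mulVec (uv x)) j = (1 + nsq x) / 2 * g j 0 + ∑ l : Fin n, g j l.succ * x l := by
  simp [Matrix.mulVec, dotProduct, Fin.sum_univ_succ, uv, mul_comm]

def Jm (n : ℕ) : Matrix (Fin (n+1)) (Fin (n+1)) ℝ :=
  Matrix.diagonal (fun j => if j = 0 then -1 else 1)

lemma Jm_mul_Jm : Jm n * Jm n = 1 := by
  rw [Jm, Matrix.diagonal_mul_diagonal]
  have : (fun j : Fin (n+1) => (if j = 0 then (-1:ℝ) else 1) * (if j = 0 then -1 else 1)) = fun _ => 1 := by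
    funext j; by_cases h : j = 0 <;> simp [h]
  rw [this, Matrix.diagonal_one]

lemma Jm_transpose : (Jm n)ᵀ = Jm n := Matrix.diagonal_transpose _

end SOn1Aux

namespace SOn1Aux

open Matrix Finset

variable {n : ℕ}

def bf (X Y : Fin (n+1) → ℝ) : ℝ := -(X 0 * Y 0) + ∑ i : Fin n, X i.succ * Y i.succ

lemma qform_eq_bf (X : Fin (n+1) → ℝ) : Qform n X = bf X X := by
  simp [Qform, bf, sq]

lemma qform_add (A B : Fin (n+1) → ℝ) :
    Qform n (A + B) = Qform n A + Qform n B + 2 * bf A B := by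
  simp only [Qform, bf, Pi.add_apply]
  have h : ∀ i : Fin n, (A i.succ + B i.succ)^2
      = A i.succ^2 + B i.succ^2 + 2*(A i.succ * B i.succ) := fun i => by ring
  rw [Finset.sum_congr rfl fun i _ => h i, Finset.sum_add_distrib, Finset.sum_add_distrib,
    ← Finset.mul_sum]
  ring

lemma bf_g {g : Matrix (Fin (n+1)) (Fin (n+1)) ℝ}
    (hg : ∀ x : Fin (n+1) → ℝ, Qform n (g.mulVec x) = Qform n x) (X Y : Fin (n+1) → ℝ) :
    bf (g.mulVec X) (g.mulVec Y) = bf X Y := by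
  have h1 := hg (X + Y)
  rw [Matrix.mulVec_add, qform_add, qform_add, hg X, hg Y] at h1
  linarith

lemma bf_dot (X Y : Fin (n+1) → ℝ) : bf X Y = X ⬝ᵥ (Jm n).mulVec Y := by
  simp [bf, dotProduct, Jm, Matrix.mulVec_diagonal, Fin.sum_univ_succ, Fin.succ_ne_zero]

lemma entry_eq (M : Matrix (Fin (n+1)) (Fin (n+1)) ℝ) (i j : Fin (n+1)) :
    M i j = Pi.single i 1 ⬝ᵥ M.mulVec (Pi.single j (1:ℝ)) := by
  simp [dotProduct, Matrix.mulVec, Pi.single_apply, Finset.sum_ite_eq']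

lemma mat_of_qinv {g : Matrix (Fin (n+1)) (Fin (n+1)) ℝ}
    (hg : ∀ x : Fin (n+1) → ℝ, Qform n (g.mulVec x) = Qform n x) :
    gᵀ * Jm n * g = Jm n := by
  ext i j
  rw [entry_eq (gᵀ * Jm n * g) i j, ← Matrix.mulVec_mulVec, ← Matrix.mulVec_mulVec]
  rw [Matrix.dotProduct_mulVec, Matrix.vecMul_transpose]
  rw [show (g.mulVec (Pi.single i 1)) ⬝ᵥ ((Jm n).mulVec (g.mulVec (Pi.single j 1)))
      = bf (g.mulVec (Pi.single i 1)) (g.mulVec (Pi.single j 1)) from (bf_dot _ _).symm]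
  rw [bf_g hg, bf_dot]
  exact (entry_eq _ i j).symm

end SOn1Aux

namespace SOn1Aux

open Matrix Finset

variable {n : ℕ}

lemma qinv_of_mat {M : Matrix (Fin (n+1)) (Fin (n+1)) ℝ}
    (h : Mᵀ * Jm n * M = Jm n) :
    ∀ x : Fin (n+1) → ℝ, Qform n (M.mulVec x) = Qform n x := by
  intro x
  rw [qform_eq_bf, qform_eq_bf, bf_dot, bf_dot, Matrix.mulVec_mulVec,
    Matrix.dotProduct_mulVec, ← Matrix.vecMul_transpose, Matrix.vecMul_vecMul,
    ← Matrix.mul_assoc, h]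
  rw [show x ᵥ* Jm n = Jm n *ᵥ x by rw [← Jm_transpose, Matrix.mulVec_transpose, Jm_transpose]]
  exact dotProduct_comm _ _

lemma inv_of_mat {g : Matrix (Fin (n+1)) (Fin (n+1)) ℝ}
    (h : gᵀ * Jm n * g = Jm n) : g * (Jm n * gᵀ * Jm n) = 1 := by
  rw [mul_eq_one_comm]
  calc Jm n * gᵀ * Jm n * g = Jm n * (gᵀ * Jm n * g) := by
        rw [Matrix.mul_assoc, Matrix.mul_assoc, Matrix.mul_assoc]
      _ = 1 := by rw [h, Jm_mul_Jm]

lemma mat_rev {g : Matrix (Fin (n+1)) (Fin (n+1)) ℝ}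
    (h : gᵀ * Jm n * g = Jm n) : g * Jm n * gᵀ = Jm n := by
  have h2 := inv_of_mat h
  have h3 : g * (Jm n * gᵀ * Jm n) * Jm n = g * Jm n * gᵀ := by
    simp only [Matrix.mul_assoc, Jm_mul_Jm, Matrix.mul_one]
  rw [← h3, h2, Matrix.one_mul]

lemma col0_sq {g : Matrix (Fin (n+1)) (Fin (n+1)) ℝ}
    (h : gᵀ * Jm n * g = Jm n) :
    ∑ p : Fin n, g p.succ 0 ^ 2 = g 0 0 ^ 2 - 1 := by
  have := congrFun (congrFun h 0) 0
  rw [Matrix.mul_apply] at this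
  simp only [Matrix.mul_diagonal, Jm, Matrix.transpose_apply, Matrix.diagonal_apply_eq] at this
  rw [Fin.sum_univ_succ] at this
  simp only [if_pos rfl, Fin.succ_ne_zero, if_false, if_true] at this
  have h2 : ∀ p : Fin n, (g p.succ 0 * (1:ℝ)) * g p.succ 0 = g p.succ 0 ^ 2 := fun p => by ring
  rw [Finset.sum_congr rfl fun p _ => h2 p] at this
  nlinarith [this]

lemma row0_sq {g : Matrix (Fin (n+1)) (Fin (n+1)) ℝ}
    (h : gᵀ * Jm n * g = Jm n) :
    ∑ l : Fin n, g 0 l.succ ^ 2 = g 0 0 ^ 2 - 1 := by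
  have h2 := mat_rev h
  have := congrFun (congrFun h2 0) 0
  rw [Matrix.mul_apply] at this
  simp only [Matrix.mul_diagonal, Jm, Matrix.transpose_apply, Matrix.diagonal_apply_eq] at this
  rw [Fin.sum_univ_succ] at this
  simp only [if_pos rfl, Fin.succ_ne_zero, if_false, if_true] at this
  have h3 : ∀ l : Fin n, (g 0 l.succ * (1:ℝ)) * g 0 l.succ = g 0 l.succ ^ 2 := fun l => by ring
  rw [Finset.sum_congr rfl fun l _ => h3 l] at this
  nlinarith [this]

end SOn1Aux

namespace SOn1Aux

open Matrix Finset

variable {n : ℕ}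

lemma act_apply (g : Matrix (Fin (n+1)) (Fin (n+1)) ℝ) (x : EuclideanSpace ℝ (Fin n))
    (p : Fin n) :
    act g x p = (g.mulVec (uv x)) p.succ / Dg g x := by
  rw [act, WithLp.ofLp_toLp, Dg, mulVec_uv, mulVec_uv, nsq_eq]
  ring_nf

lemma Dg_pos {M : Matrix (Fin (n+1)) (Fin (n+1)) ℝ}
    (h : Mᵀ * Jm n * M = Jm n) (h00 : 1 ≤ M 0 0)
    {x : EuclideanSpace ℝ (Fin n)} (hx : nsq x < 1) : 0 < Dg M x := by
  have hrow := row0_sq h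
  have hcs := Finset.sum_mul_sq_le_sq_mul_sq Finset.univ (fun l : Fin n => M 0 l.succ)
    (fun l => x l)
  rw [hrow] at hcs
  rw [Dg, mulVec_uv]
  set S := ∑ l : Fin n, M 0 l.succ * x l with hS
  set t := nsq x with ht
  have ht0 : 0 ≤ t := nsq_nonneg x
  have htn : t = ∑ l : Fin n, x l ^ 2 := rfl
  rw [← htn] at hcs
  -- hcs : S^2 ≤ (M 0 0^2 - 1) * t
  by_contra hcon
  push_neg at hcon
  set m := M 0 0 with hm
  have hK : (1 :ℝ) ≤ (1 - t)/2 + (1 + t)/2 * m := by nlinarith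
  have hS2 : (1 - t)/2 + (1 + t)/2 * m ≤ -S := by linarith
  have hsq : ((1 - t)/2 + (1 + t)/2 * m) * ((1 - t)/2 + (1 + t)/2 * m) ≤ (-S) * (-S) :=
    mul_self_le_mul_self (by linarith) hS2
  have hss : (-S) * (-S) = S^2 := by ring
  have e1 : ((1 - t)/2 + (1 + t)/2 * m) * ((1 - t)/2 + (1 + t)/2 * m) - (m^2-1)*t
      = ((1+t)+m*(1-t))^2/4 := by ring
  have e2 : (2:ℝ) ≤ (1+t)+m*(1-t) := by nlinarith
  have e3 : (4:ℝ) ≤ ((1+t)+m*(1-t))^2 := by nlinarith [e2]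
  linarith [hsq, hcs, hss, e1, e3]

end SOn1Aux

namespace SOn1Aux

open Matrix Finset

variable {n : ℕ}

lemma qform_uv (x : EuclideanSpace ℝ (Fin n)) :
    Qform n (uv x) = -((1 - nsq x)/2)^2 := by
  have h0 : uv x 0 = (1 + nsq x)/2 := rfl
  have hs : ∀ i : Fin n, uv x i.succ = x i := fun i => rfl
  rw [Qform, h0, Finset.sum_congr rfl fun i _ => by rw [hs i]]
  have : ∑ i : Fin n, x i ^ 2 = nsq x := rfl
  rw [this]
  ring

lemma spatial_sq {g : Matrix (Fin (n+1)) (Fin (n+1)) ℝ}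
    (hg : ∀ x : Fin (n+1) → ℝ, Qform n (g.mulVec x) = Qform n x)
    (x : EuclideanSpace ℝ (Fin n)) :
    ∑ p : Fin n, (g.mulVec (uv x)) p.succ ^ 2
      = (g.mulVec (uv x)) 0 ^ 2 - ((1 - nsq x)/2)^2 := by
  have := hg (uv x)
  rw [qform_uv, Qform] at this
  linarith

lemma norm_act {g : Matrix (Fin (n+1)) (Fin (n+1)) ℝ}
    (hg : ∀ x : Fin (n+1) → ℝ, Qform n (g.mulVec x) = Qform n x)
    {x : EuclideanSpace ℝ (Fin n)} (hD : Dg g x ≠ 0) :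
    (1 - nsq (act g x)) * Dg g x = 1 - nsq x := by
  have hact : nsq (act g x)
      = ((g.mulVec (uv x)) 0 ^ 2 - ((1 - nsq x)/2)^2) / Dg g x ^ 2 := by
    rw [nsq, Finset.sum_congr rfl fun p _ => by rw [act_apply, div_pow],
      ← Finset.sum_div, spatial_sq hg]
  have hDdef : Dg g x = (1 - nsq x)/2 + (g.mulVec (uv x)) 0 := rfl
  have key : ∀ s A0 D : ℝ, D ≠ 0 → D = s + A0 → (1 - (A0^2 - s^2)/D^2) * D = 2*s := by
    intro s A0 D h0 hD
    subst hD
    field_simp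
    ring
  rw [hact, key ((1 - nsq x)/2) ((g.mulVec (uv x)) 0) (Dg g x) hD hDdef]
  ring

lemma dist_act {g : Matrix (Fin (n+1)) (Fin (n+1)) ℝ}
    (hg : ∀ x : Fin (n+1) → ℝ, Qform n (g.mulVec x) = Qform n x)
    {y z : EuclideanSpace ℝ (Fin n)} (hDy : Dg g y ≠ 0) (hDz : Dg g z ≠ 0) :
    nsq (act g y - act g z) * (Dg g y * Dg g z) = nsq (y - z) := by
  set A := g.mulVec (uv y) with hA
  set B := g.mulVec (uv z) with hB
  set Dy := Dg g y with hDy'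
  set Dz := Dg g z with hDz'
  have hSA : ∑ p : Fin n, A p.succ ^ 2 = A 0 ^ 2 - ((1 - nsq y)/2)^2 := spatial_sq hg y
  have hSB : ∑ p : Fin n, B p.succ ^ 2 = B 0 ^ 2 - ((1 - nsq z)/2)^2 := spatial_sq hg z
  have hSAB : ∑ p : Fin n, A p.succ * B p.succ
      = A 0 * B 0 - (1 + nsq y)/2 * ((1 + nsq z)/2) + ∑ l : Fin n, y l * z l := by
    have hbf := bf_g hg (uv y) (uv z)
    rw [bf, bf, ← hA, ← hB] at hbf
    have h1 : uv y 0 = (1 + nsq y)/2 := rfl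
    have h2 : uv z 0 = (1 + nsq z)/2 := rfl
    have h3 : ∀ i : Fin n, uv y i.succ * uv z i.succ = y i * z i := fun i => rfl
    rw [h1, h2, Finset.sum_congr rfl fun i _ => h3 i] at hbf
    linarith
  have hsub : nsq (y - z) = nsq y - 2 * (∑ l : Fin n, y l * z l) + nsq z := by
    rw [nsq, Finset.sum_congr rfl fun l _ =>
      (by simp [PiLp.sub_apply]; ring : (y - z) l ^ 2 = y l ^2 - 2*(y l * z l) + z l ^2),
      Finset.sum_add_distrib, Finset.sum_sub_distrib, ← Finset.mul_sum]
    rfl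
  have hexp : nsq (act g y - act g z)
      = ((∑ p : Fin n, A p.succ ^2) * Dz^2 - 2 * (∑ p : Fin n, A p.succ * B p.succ) * (Dy*Dz)
        + (∑ p : Fin n, B p.succ ^2) * Dy^2) / (Dy^2 * Dz^2) := by
    rw [nsq, Finset.sum_congr rfl fun p _ => (by
        rw [PiLp.sub_apply, act_apply, act_apply, ← hA, ← hB, ← hDy', ← hDz',
          div_sub_div _ _ hDy hDz, div_pow,
          show (Dy*Dz)^2 = Dy^2*Dz^2 from by ring,
          show (A p.succ * Dz - Dy * B p.succ)^2
            = A p.succ^2 * Dz^2 - 2*(A p.succ * B p.succ)*(Dy*Dz) + B p.succ^2*Dy^2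
            from by ring] : (act g y - act g z) p ^2
          = (A p.succ^2 * Dz^2 - 2*(A p.succ * B p.succ)*(Dy*Dz) + B p.succ^2*Dy^2)
            / (Dy^2*Dz^2))]
    rw [← Finset.sum_div, Finset.sum_add_distrib, Finset.sum_sub_distrib, ← Finset.sum_mul,
      ← Finset.sum_mul, ← Finset.sum_mul, ← Finset.mul_sum]
  have hA0 : A 0 = Dy - (1 - nsq y)/2 := by rw [hDy', Dg, ← hA]; ring
  have hB0 : B 0 = Dz - (1 - nsq z)/2 := by rw [hDz', Dg, ← hB]; ring
  rw [hexp, hSA, hSB, hSAB, hsub, hA0, hB0]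
  field_simp
  ring
end SOn1Aux

namespace SOn1Aux

open Matrix Finset

variable {n : ℕ}

lemma uv_act {g : Matrix (Fin (n+1)) (Fin (n+1)) ℝ}
    (hg : ∀ x : Fin (n+1) → ℝ, Qform n (g.mulVec x) = Qform n x)
    {x : EuclideanSpace ℝ (Fin n)} (hD : Dg g x ≠ 0) :
    uv (act g x) = (Dg g x)⁻¹ • (g.mulVec (uv x)) := by
  have hnorm := norm_act hg hD
  funext j
  refine Fin.cases ?_ ?_ j
  · have h1 : uv (act g x) 0 = (1 + nsq (act g x))/2 := rfl
    rw [h1, Pi.smul_apply, smul_eq_mul]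
    have h2 : (g.mulVec (uv x)) 0 = Dg g x - (1 - nsq x)/2 := by rw [Dg]; ring
    rw [h2]
    field_simp
    nlinarith [hnorm]
  · intro p
    have h1 : uv (act g x) p.succ = act g x p := rfl
    rw [h1, act_apply, Pi.smul_apply, smul_eq_mul]
    field_simp

lemma act_comp (g' : Matrix (Fin (n+1)) (Fin (n+1)) ℝ)
    {g : Matrix (Fin (n+1)) (Fin (n+1)) ℝ}
    (hg : ∀ x : Fin (n+1) → ℝ, Qform n (g.mulVec x) = Qform n x)
    {x : EuclideanSpace ℝ (Fin n)} (hD : Dg g x ≠ 0) :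
    act g' (act g x) = act (g' * g) x := by
  have huv := uv_act hg hD
  have hnorm := norm_act hg hD
  ext p
  rw [act_apply, act_apply]
  have hnum : (g'.mulVec (uv (act g x))) p.succ
      = (Dg g x)⁻¹ * (((g' * g).mulVec (uv x)) p.succ) := by
    rw [huv, Matrix.mulVec_smul, Matrix.mulVec_mulVec]
    rfl
  have hden : Dg g' (act g x) = (Dg g x)⁻¹ * Dg (g' * g) x := by
    rw [Dg, huv, Matrix.mulVec_smul, Matrix.mulVec_mulVec]
    have h1 : (1 - nsq (act g x))/2 = (Dg g x)⁻¹ * ((1 - nsq x)/2) := by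
      field_simp
      linarith [hnorm]
    rw [h1, Pi.smul_apply, smul_eq_mul,
      show Dg (g' * g) x = (1 - nsq x)/2 + ((g' * g).mulVec (uv x)) 0 from rfl]
    ring
  rw [hnum, hden, mul_div_mul_left _ _ (inv_ne_zero hD)]

lemma act_one (x : EuclideanSpace ℝ (Fin n)) : act (1 : Matrix (Fin (n+1)) (Fin (n+1)) ℝ) x = x := by
  ext p
  rw [act_apply, Matrix.one_mulVec, Dg, Matrix.one_mulVec]
  have h0 : uv x 0 = (1 + nsq x)/2 := rfl
  have hp : uv x p.succ = x p := rfl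
  rw [h0, hp, show (1 - nsq x)/2 + (1 + nsq x)/2 = 1 from by ring, div_one]

end SOn1Aux

namespace SOn1Aux

open Matrix Finset

variable {n : ℕ}

lemma nsq_sub (y z : EuclideanSpace ℝ (Fin n)) :
    nsq (y - z) = nsq y - 2 * (∑ l : Fin n, y l * z l) + nsq z := by
  rw [nsq, Finset.sum_congr rfl fun l _ =>
    (by simp [PiLp.sub_apply]; ring : (y - z) l ^ 2 = y l ^2 - 2*(y l * z l) + z l ^2),
    Finset.sum_add_distrib, Finset.sum_sub_distrib, ← Finset.mul_sum]
  rfl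

lemma hT_J_h {g : Matrix (Fin (n+1)) (Fin (n+1)) ℝ}
    (hq : gᵀ * Jm n * g = Jm n) :
    (Jm n * gᵀ * Jm n)ᵀ * Jm n * (Jm n * gᵀ * Jm n) = Jm n := by
  have hTr : (Jm n * gᵀ * Jm n)ᵀ = Jm n * (g * Jm n) := by
    rw [Matrix.transpose_mul, Matrix.transpose_mul, Jm_transpose, Matrix.transpose_transpose]
  have cancel : ∀ X : Matrix (Fin (n+1)) (Fin (n+1)) ℝ, Jm n * (Jm n * X) = X := fun X => by
    rw [← Matrix.mul_assoc, Jm_mul_Jm, Matrix.one_mul]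
  have grev2 : g * (Jm n * (gᵀ * Jm n)) = 1 := by
    rw [← Matrix.mul_assoc, ← Matrix.mul_assoc, mat_rev hq, Jm_mul_Jm]
  rw [hTr]
  simp only [Matrix.mul_assoc, cancel]
  rw [grev2, Matrix.mul_one]

lemma h_entries {g : Matrix (Fin (n+1)) (Fin (n+1)) ℝ} (i j : Fin (n+1)) :
    (Jm n * gᵀ * Jm n) i j
      = (if i = 0 then -1 else 1) * g j i * (if j = 0 then (-1:ℝ) else 1) := by
  rw [Jm, Matrix.mul_diagonal, Matrix.diagonal_mul, Matrix.transpose_apply]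

end SOn1Aux

namespace SOn1Aux

lemma arith0 {a ε S T : ℝ} (ha : 1 ≤ a) (hε : 0 < ε) (hcs : S^2 ≤ (a^2-1)*T)
    (hT : 0 ≤ T) (hT2 : T < ε^2) : -((1+a)*ε) ≤ S := by
  by_contra hc
  push_neg at hc
  have hm := mul_pos
    (show (0:ℝ) < (1+a)*ε - S by nlinarith [mul_pos (show (0:ℝ) < 1+a by linarith) hε])
    (show (0:ℝ) < -((1+a)*ε) - S by linarith)
  nlinarith [hm]

lemma arith1 {a ε t S : ℝ} (ha : 1 ≤ a) (hε : 0 < ε) (hε1 : ε < 1/6)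
    (h1 : 0 ≤ t) (h2 : t < ε^2) (h3 : -((1+a)*ε) ≤ S) :
    (1+a)/4 < (1-t)/2 + ((1+t)/2*a + S) := by
  nlinarith [mul_nonneg h1 (le_trans zero_le_one ha), mul_pos hε hε]

lemma arith_outer {a ε N Dx t : ℝ} (ha : 1 ≤ a) (hε : 0 < ε)
    (hN : 0 ≤ N) (ht : t < ε^2) (hDx : (1+a)/4 < Dx)
    (hprod : N * (Dx * ((1+a)/2)) = t) : N < (6*(2/(1+a))*ε)^2 := by
  have hapos : (0:ℝ) < 1 + a := by linarith
  have h8 : N * ((1+a)^2/8) ≤ N * (Dx * ((1+a)/2)) := by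
    apply mul_le_mul_of_nonneg_left _ hN
    nlinarith
  have h9 : N * (1+a)^2 < 8 * ε^2 := by nlinarith
  rw [show (6*(2/(1+a))*ε)^2 = 144*ε^2/(1+a)^2 from by field_simp; ring,
    lt_div_iff₀ (by positivity : (0:ℝ) < (1+a)^2)]
  nlinarith

lemma arith_inner1 {a ε D P' nd n0 : ℝ} (ha : 1 ≤ a) (hε : 0 < ε) (hε1 : ε < 1/6)
    (hid : D*(1+a) = 2 - 2*P'*(1+a) + (a-1)*nd*(1+a)/2)
    (hcs : P'^2 ≤ n0*nd) (hn0a : 0 ≤ n0) (hn0b : n0 < 1) (hnd0 : 0 ≤ nd)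
    (hnd : nd < ε^2/(8*(1+a)^2)) : 1/(1+a) < D := by
  have hapos : (0:ℝ) < 1 + a := by linarith
  have hP'lt : P' < ε/(2*(1+a)) := by
    have h1 : P'^2 < (ε/(2*(1+a)))^2 := by
      have h2 : n0*nd ≤ nd := by nlinarith
      have h3 : (ε/(2*(1+a)))^2 = ε^2/(4*(1+a)^2) := by
        field_simp
        ring
      rw [h3]
      have h4 : ε^2/(8*(1+a)^2) < ε^2/(4*(1+a)^2) := by
        apply div_lt_div_of_pos_left (by positivity) (by positivity)
        nlinarith
      linarith
    have h5 : (0:ℝ) < ε/(2*(1+a)) := by positivity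
    nlinarith
  have hP2 : 2*P'*(1+a) < ε := by
    have := mul_lt_mul_of_pos_right hP'lt hapos
    rw [div_mul_eq_mul_div, mul_div_assoc] at this
    have h6 : (1+a)/(2*(1+a)) = 1/2 := by
      rw [div_eq_div_iff (by positivity) (by norm_num)]
      ring
    rw [h6] at this
    linarith
  rw [div_lt_iff₀ hapos]
  nlinarith [mul_nonneg (mul_nonneg (by linarith : (0:ℝ) ≤ a - 1) hnd0) hapos.le]

lemma arith_inner2 {a N D nd ε : ℝ} (ha : 1 ≤ a) (hN : 0 ≤ N)
    (hid : N*(D*(2/(1+a))) = nd) (hD : 1/(1+a) < D)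
    (hnd : nd < ε^2/(8*(1+a)^2)) (hε : 0 < ε) : N < ε^2 := by
  have hapos : (0:ℝ) < 1 + a := by linarith
  by_contra hcon
  push_neg at hcon
  have h1 : N*((1/(1+a))*(2/(1+a))) ≤ N*(D*(2/(1+a))) := by
    apply mul_le_mul_of_nonneg_left _ hN
    apply mul_le_mul_of_nonneg_right hD.le (by positivity)
  have h2 : N*((1/(1+a))*(2/(1+a))) = 2*N/(1+a)^2 := by
    field_simp
  have h3 : 2*N/(1+a)^2 < ε^2/(8*(1+a)^2) := by linarith
  rw [div_lt_div_iff₀ (by positivity) (by positivity)] at h3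
  nlinarith [sq_nonneg (1+a), pow_pos hapos 2]

end SOn1Aux


set_option maxHeartbeats 2000000 in
open SOn1Aux Matrix Finset in
/-- Fact 1: for g ∈ SO(n,1), x₀ = g·0 and 0 < ε < 1/6,
B(x₀, (√2/8)(1-|x₀|²)ε) ⊆ g·B(0,ε) ⊆ B(x₀, 6(1-|x₀|²)ε). -/
theorem stmt12 (n : ℕ) (hn : 3 ≤ n) (g : Matrix (Fin (n + 1)) (Fin (n + 1)) ℝ)
    (hg : IsSOn1 n g) (ε : ℝ) (hε : 0 < ε) (hε1 : ε < 1 / 6) :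
    ball (act g (0 : EuclideanSpace ℝ (Fin n)))
        (Real.sqrt 2 / 8 * (1 - ‖act g (0 : EuclideanSpace ℝ (Fin n))‖ ^ 2) * ε) ⊆
      act g '' ball (0 : EuclideanSpace ℝ (Fin n)) ε ∧
    act g '' ball (0 : EuclideanSpace ℝ (Fin n)) ε ⊆
      ball (act g (0 : EuclideanSpace ℝ (Fin n)))
        (6 * (1 - ‖act g (0 : EuclideanSpace ℝ (Fin n))‖ ^ 2) * ε) := by
  have hq := hg.q_inv
  have hmat := mat_of_qinv hq
  set a := g 0 0 with ha_def
  have ha : 1 ≤ a := hg.g00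
  have hapos : (0:ℝ) < 1 + a := by linarith
  have hane : (1:ℝ) + a ≠ 0 := ne_of_gt hapos
  set x0 : EuclideanSpace ℝ (Fin n) := act g 0 with hx0_def
  -- basic facts about x0
  have hD0 : Dg g (0 : EuclideanSpace ℝ (Fin n)) = (1 + a)/2 := by
    rw [Dg, mulVec_uv, nsq_zero]
    simp
    ring
  have hD0pos : 0 < Dg g (0 : EuclideanSpace ℝ (Fin n)) := by rw [hD0]; linarith
  have hD0ne := ne_of_gt hD0pos
  have hx0n : (1 - nsq x0) * ((1 + a)/2) = 1 := by
    have := norm_act hq hD0ne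
    rw [nsq_zero, hD0] at this
    rw [hx0_def]
    linarith
  have h1mx0 : 1 - nsq x0 = 2/(1 + a) := by
    field_simp
    linarith [hx0n]
  have hn0lt : nsq x0 < 1 := by
    have h2 : 0 < 2/(1+a) := by positivity
    linarith
  have hn0nn : 0 ≤ nsq x0 := nsq_nonneg x0
  have e0 : (1:ℝ) - ‖act g (0 : EuclideanSpace ℝ (Fin n))‖ ^ 2 = 2/(1 + a) := by
    rw [← nsq_eq, ← hx0_def, h1mx0]
  have hx0norm : ‖x0‖ < 1 := by
    have : ‖x0‖^2 < 1^2 := by rw [← nsq_eq]; simpa using hn0lt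
    exact lt_of_pow_lt_pow_left₀ 2 (by norm_num) this
  have hx0coord : ∀ l : Fin n, g l.succ 0 = (1 + a) * x0 l := by
    intro l
    have h1 : x0 l = 2⁻¹ * g l.succ 0 / ((1 + a)/2) := by
      rw [hx0_def, act_apply, mulVec_uv, nsq_zero, hD0]
      simp
    rw [h1]
    field_simp
  have hs2 : Real.sqrt 2 < 2 := by
    nlinarith [Real.sq_sqrt (show (0:ℝ) ≤ 2 by norm_num), Real.sqrt_nonneg 2]
  have hs2pos : 0 < Real.sqrt 2 := Real.sqrt_pos.mpr (by norm_num)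
  rw [e0]
  constructor
  · -- inner inclusion
    intro y hy
    rw [mem_ball, dist_eq_norm] at hy
    -- radius facts
    have hr1pos : 0 < Real.sqrt 2 / 8 * (2/(1+a)) * ε := by positivity
    have hr1sq : (Real.sqrt 2 / 8 * (2/(1+a)) * ε)^2 = ε^2/(8*(1+a)^2) := by
      rw [mul_pow, mul_pow, div_pow, div_pow, Real.sq_sqrt (by norm_num : (0:ℝ) ≤ 2)]
      field_simp
      ring
    have hnd : nsq (y - x0) < ε^2/(8*(1+a)^2) := by
      rw [nsq_eq, ← hr1sq]
      exact pow_lt_pow_left₀ hy (norm_nonneg _) (by norm_num)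
    have hndnn : 0 ≤ nsq (y - x0) := nsq_nonneg _
    -- y is in the unit ball
    have hr1small : Real.sqrt 2 / 8 * (2/(1+a)) * ε < 1/(1+a) := by
      have he : Real.sqrt 2 / 8 * (2/(1+a)) * ε = (Real.sqrt 2 * ε/4) * (1/(1+a)) := by
        field_simp
        ring
      have hf : Real.sqrt 2 * ε/4 < 1 := by nlinarith
      calc Real.sqrt 2 / 8 * (2/(1+a)) * ε = (Real.sqrt 2 * ε/4) * (1/(1+a)) := he
        _ < 1 * (1/(1+a)) := by
            apply mul_lt_mul_of_pos_right hf
            positivity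
        _ = 1/(1+a) := one_mul _
    have hx0dist : 1/(1+a) ≤ 1 - ‖x0‖ := by
      have hfac : (1 - ‖x0‖)*(1 + ‖x0‖) = 2/(1+a) := by
        rw [show (1 - ‖x0‖)*(1 + ‖x0‖) = 1 - ‖x0‖^2 from by ring, ← nsq_eq, h1mx0]
      have h2a : 2/(1+a) = 2*(1/(1+a)) := by ring
      nlinarith [norm_nonneg x0, hx0norm]
    have hyn : ‖y‖ < 1 := by
      have t1 : ‖y‖ ≤ ‖y - x0‖ + ‖x0‖ := by
        have := norm_add_le (y - x0) x0
        rwa [sub_add_cancel] at this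
      linarith
    have hny1 : nsq y < 1 := by
      rw [nsq_eq]
      exact pow_lt_one₀ (norm_nonneg y) hyn (by norm_num)
    -- the inverse matrix
    set h := Jm n * gᵀ * Jm n with hh_def
    have hmat_h : hᵀ * Jm n * h = Jm n := hT_J_h hmat
    have hq_h := qinv_of_mat hmat_h
    have hgh : g * h = 1 := inv_of_mat hmat
    have hhg : h * g = 1 := mul_eq_one_comm.mp hgh
    have hh00 : h 0 0 = a := by
      rw [hh_def, h_entries]
      simp [ha_def]
    have hhrow : ∀ l : Fin n, h 0 l.succ = -(g l.succ 0) := by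
      intro l
      rw [hh_def, h_entries]
      simp [Fin.succ_ne_zero]
    have hcomp0 : act h x0 = 0 := by
      rw [hx0_def, act_comp h hq hD0ne, hhg, act_one]
    have hDhx0pos : 0 < Dg h x0 := Dg_pos hmat_h (by rw [hh00]; exact ha) hn0lt
    have hDhx0 : Dg h x0 = 2/(1+a) := by
      have hni := norm_act hq_h (ne_of_gt hDhx0pos)
      rw [hcomp0, nsq_zero, h1mx0] at hni
      linarith
    -- formula for Dg h y
    have hDhy_form : Dg h y = (1 - nsq y)/2
        + ((1 + nsq y)/2 * a + -((1+a) * (∑ l : Fin n, y l * x0 l))) := by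
      rw [Dg, mulVec_uv, hh00]
      congr 1
      congr 1
      rw [Finset.mul_sum, ← Finset.sum_neg_distrib]
      refine Finset.sum_congr rfl fun l _ => ?_
      rw [hhrow l, hx0coord l]
      ring
    set P := ∑ l : Fin n, y l * x0 l with hP_def
    set P' := ∑ l : Fin n, x0 l * (y - x0) l with hP'_def
    have hP'eq : P' = P - nsq x0 := by
      rw [hP'_def, Finset.sum_congr rfl fun l _ => (by rw [PiLp.sub_apply]; ring :
        x0 l * (y - x0) l = y l * x0 l - x0 l^2), Finset.sum_sub_distrib]
      rfl
    have hndP : nsq (y - x0) = nsq y - 2*P + nsq x0 := nsq_sub y x0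
    have hcsP : P'^2 ≤ nsq x0 * nsq (y - x0) :=
      Finset.sum_mul_sq_le_sq_mul_sq Finset.univ (fun l => x0 l) (fun l => (y - x0) l)
    have hn0m : nsq x0 * (1+a) = a - 1 := by
      have h2 : (1 - nsq x0)*(1+a) = 2 := by
        rw [h1mx0]
        field_simp
      linear_combination -h2
    have hDhy_id : Dg h y * (1+a)
        = 2 - 2*P'*(1+a) + (a-1)*(nsq (y - x0))*(1+a)/2 := by
      rw [hDhy_form]
      linear_combination (2*(1+a))*hP'eq + (-(a-1)*(1+a)/2)*hndP + (-(a+3)/2)*hn0m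
    have hDhylow : 1/(1+a) < Dg h y :=
      arith_inner1 ha hε hε1 hDhy_id hcsP hn0nn hn0lt hndnn hnd
    have hDhypos : 0 < Dg h y := lt_trans (by positivity) hDhylow
    have hxval : act g (act h y) = y := by
      rw [act_comp g hq_h (ne_of_gt hDhypos), hgh, act_one]
    have hdist := dist_act hq_h (ne_of_gt hDhypos) (ne_of_gt hDhx0pos)
    rw [hcomp0, sub_zero] at hdist
    rw [hDhx0] at hdist
    have hnx : nsq (act h y) < ε^2 :=
      arith_inner2 ha (nsq_nonneg _) hdist hDhylow hnd hε
    refine ⟨act h y, ?_, hxval⟩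
    rw [mem_ball, dist_zero_right]
    refine lt_of_pow_lt_pow_left₀ 2 hε.le ?_
    rw [← nsq_eq]
    exact hnx
  · -- outer inclusion
    rintro y ⟨x, hx, rfl⟩
    rw [mem_ball, dist_zero_right] at hx
    have hnx : nsq x < ε^2 := by
      rw [nsq_eq]
      exact pow_lt_pow_left₀ hx (norm_nonneg x) (by norm_num)
    have hnx1 : nsq x < 1 := by nlinarith
    -- lower bound on Dg g x
    have hrow := row0_sq hmat
    have hcs := Finset.sum_mul_sq_le_sq_mul_sq Finset.univ (fun l : Fin n => g 0 l.succ)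
      (fun l => x l)
    rw [hrow] at hcs
    have hcs' : (∑ l : Fin n, g 0 l.succ * x l)^2 ≤ (a^2 - 1) * nsq x := hcs
    have hDxlow : (1 + a)/4 < Dg g x := by
      rw [Dg, mulVec_uv]
      set S := ∑ l : Fin n, g 0 l.succ * x l with hS
      exact arith1 ha hε hε1 (nsq_nonneg x) hnx
        (arith0 ha hε hcs' (nsq_nonneg x) hnx)
    have hDxpos : 0 < Dg g x := by linarith
    have hkey := dist_act hq (ne_of_gt hDxpos) hD0ne
    rw [sub_zero] at hkey
    rw [mem_ball, dist_eq_norm]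
    have hR : 0 < 6 * (2/(1+a)) * ε := by positivity
    refine lt_of_pow_lt_pow_left₀ 2 (le_of_lt hR) ?_
    rw [← nsq_eq]
    have hprod : nsq (act g x - x0) * (Dg g x * ((1+a)/2)) = nsq x := by
      rw [← hD0]; exact hkey
    exact arith_outer ha hε (nsq_nonneg _) hnx hDxlow hprod
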